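/- Let J: ℝ^m × ℝ^m → ℝ be a nonnegative measurable function, Z an m-dimensional standard Gaussian vector, Z_G an m-dimensional Gaussian with variance σ_G² ≥ 1 per coordinate, X₀ independent of both, and S = {z : ‖z‖² ≤ mL²σ_G²}. Then E[J(X₀, Z)] ≥ σ_G^m e^{−mL²(σ_G²−1)/2} · E[J(X₀, Z_G) | Z_G ∈ S] · Pr(Z_G ∈ S). -/

import Mathlib

open MeasureTheory ProbabilityTheory Real

/-- The `m`-dimensional Gaussian measure with i.i.d. `N(0, σ²)` coordinates,
defined via its density with respect to Lebesgue measure. -/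
noncomputable def gaussianVec (m : ℕ) (σ : ℝ) : Measure (EuclideanSpace ℝ (Fin m)) :=
  volume.withDensity
    (fun z => ENNReal.ofReal ((2 * π * σ ^ 2) ^ (-(m : ℝ) / 2)
      * Real.exp (-‖z‖ ^ 2 / (2 * σ ^ 2))))

theorem stmt_8 {Ω : Type*} [MeasurableSpace Ω] (μ : Measure Ω) [IsProbabilityMeasure μ]
    (m : ℕ) (hm : 1 ≤ m) (σ L : ℝ) (hσ : 1 ≤ σ) (hL : 0 < L)
    (J : EuclideanSpace ℝ (Fin m) → EuclideanSpace ℝ (Fin m) → ℝ)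
    (hJmeas : Measurable (Function.uncurry J)) (hJnonneg : ∀ x z, 0 ≤ J x z)
    (X₀ Z ZG : Ω → EuclideanSpace ℝ (Fin m))
    (hX₀ : Measurable X₀) (hZ : Measurable Z) (hZG : Measurable ZG)
    (hZlaw : Measure.map Z μ = gaussianVec m 1)
    (hZGlaw : Measure.map ZG μ = gaussianVec m σ)
    (hindZ : IndepFun X₀ Z μ) (hindZG : IndepFun X₀ ZG μ)
    (hint : Integrable (fun ω => J (X₀ ω) (Z ω)) μ)
    (hintG : Integrable (fun ω => J (X₀ ω) (ZG ω)) μ) :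
    ∫ ω, J (X₀ ω) (Z ω) ∂μ
      ≥ σ ^ m * Real.exp (-(m * L ^ 2 * (σ ^ 2 - 1)) / 2)
        * ∫ ω, Set.indicator {z : EuclideanSpace ℝ (Fin m) | ‖z‖ ^ 2 ≤ m * L ^ 2 * σ ^ 2}
            (fun z => J (X₀ ω) z) (ZG ω) ∂μ := by
  classical
  set S : Set (EuclideanSpace ℝ (Fin m)) := {z | ‖z‖ ^ 2 ≤ m * L ^ 2 * σ ^ 2} with hSdef
  set c : ℝ := σ ^ m * Real.exp (-(m * L ^ 2 * (σ ^ 2 - 1)) / 2) with hcdef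
  have hσ0 : (0:ℝ) < σ := lt_of_lt_of_le one_pos hσ
  have hc0 : 0 < c := mul_pos (pow_pos hσ0 m) (exp_pos _)
  have hS : MeasurableSet S := by
    have : Measurable fun z : EuclideanSpace ℝ (Fin m) => ‖z‖ ^ 2 :=
      (measurable_norm.pow_const 2)
    exact measurableSet_le this measurable_const
  -- sigma-finiteness
  haveI hsf1 : SigmaFinite (gaussianVec m 1) := by unfold gaussianVec; infer_instance
  haveI hsfσ : SigmaFinite (gaussianVec m σ) := by unfold gaussianVec; infer_instance
  -- key measure inequality
  have key : (ENNReal.ofReal c) • ((gaussianVec m σ).restrict S) ≤ gaussianVec m 1 := by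
    unfold gaussianVec
    rw [restrict_withDensity hS, ← withDensity_smul' _ _ ENNReal.ofReal_ne_top,
      ← withDensity_indicator hS]
    refine withDensity_mono (Filter.Eventually.of_forall fun z => ?_)
    simp only [Pi.smul_apply, smul_eq_mul]
    by_cases hz : z ∈ S
    · rw [Set.indicator_of_mem hz]
      simp only [Pi.smul_apply, smul_eq_mul]
      rw [← ENNReal.ofReal_mul hc0.le]
      refine ENNReal.ofReal_le_ofReal ?_
      have hz' : ‖z‖ ^ 2 ≤ m * L ^ 2 * σ ^ 2 := hz
      have h2π : (0:ℝ) < 2 * π := by positivity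
      have hmul : (2 * π * σ ^ 2) ^ (-(m : ℝ) / 2)
          = (2 * π) ^ (-(m : ℝ) / 2) * (σ ^ 2 : ℝ) ^ (-(m : ℝ) / 2) :=
        Real.mul_rpow h2π.le (by positivity)
      have hpow : (σ:ℝ) ^ m * (σ ^ 2 : ℝ) ^ (-(m : ℝ) / 2) = 1 := by
        have : (σ ^ 2 : ℝ) ^ (-(m : ℝ) / 2) = σ ^ (-(m:ℝ)) := by
          rw [← Real.rpow_natCast σ 2, ← Real.rpow_mul hσ0.le]
          congr 1; push_cast; ring
        rw [this, Real.rpow_neg hσ0.le, ← Real.rpow_natCast σ m]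
        field_simp
      have hexp : Real.exp (-(m * L ^ 2 * (σ ^ 2 - 1)) / 2) * Real.exp (-‖z‖ ^ 2 / (2 * σ ^ 2))
          ≤ Real.exp (-‖z‖ ^ 2 / (2 * 1 ^ 2)) := by
        rw [← Real.exp_add]
        refine Real.exp_le_exp.mpr ?_
        have hσ2 : (0:ℝ) < σ ^ 2 := by positivity
        have heq : (-‖z‖ ^ 2 / (2 * 1 ^ 2))
            - ((-(m * L ^ 2 * (σ ^ 2 - 1)) / 2) + (-‖z‖ ^ 2 / (2 * σ ^ 2)))
            = ((m * L ^ 2 * σ ^ 2 - ‖z‖ ^ 2) * (σ ^ 2 - 1)) / (2 * σ ^ 2) := by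
          field_simp
          ring
        have hnn : 0 ≤ ((m * L ^ 2 * σ ^ 2 - ‖z‖ ^ 2) * (σ ^ 2 - 1)) / (2 * σ ^ 2) := by
          apply div_nonneg _ (by positivity)
          apply mul_nonneg (by linarith)
          nlinarith
        linarith [heq ▸ hnn]
      calc c * ((2 * π * σ ^ 2) ^ (-(m : ℝ) / 2) * Real.exp (-‖z‖ ^ 2 / (2 * σ ^ 2)))
          = (2 * π) ^ (-(m : ℝ) / 2) * ((σ:ℝ) ^ m * (σ ^ 2 : ℝ) ^ (-(m : ℝ) / 2))
            * (Real.exp (-(m * L ^ 2 * (σ ^ 2 - 1)) / 2) * Real.exp (-‖z‖ ^ 2 / (2 * σ ^ 2))) := by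
            rw [hmul, hcdef]; ring
        _ ≤ (2 * π) ^ (-(m : ℝ) / 2) * 1 * Real.exp (-‖z‖ ^ 2 / (2 * 1 ^ 2)) := by
            rw [hpow]
            have : (0:ℝ) ≤ (2 * π) ^ (-(m : ℝ) / 2) := Real.rpow_nonneg h2π.le _
            exact mul_le_mul_of_nonneg_left hexp (by simpa using this)
        _ = (2 * π * 1 ^ 2) ^ (-(m : ℝ) / 2) * Real.exp (-‖z‖ ^ 2 / (2 * 1 ^ 2)) := by
            congr 1; push_cast; ring
    · rw [Set.indicator_of_notMem hz]; exact zero_le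
  -- setup
  set ν : Measure (EuclideanSpace ℝ (Fin m)) := μ.map X₀ with hν
  have hpair1 : μ.map (fun ω => (X₀ ω, Z ω)) = ν.prod (gaussianVec m 1) := by
    rw [(indepFun_iff_map_prod_eq_prod_map_map hX₀.aemeasurable hZ.aemeasurable).mp hindZ, hZlaw]
  have hpair2 : μ.map (fun ω => (X₀ ω, ZG ω)) = ν.prod (gaussianVec m σ) := by
    rw [(indepFun_iff_map_prod_eq_prod_map_map hX₀.aemeasurable hZG.aemeasurable).mp hindZG,
      hZGlaw]
  set F : EuclideanSpace ℝ (Fin m) × EuclideanSpace ℝ (Fin m) → ENNReal :=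
    fun p => ENNReal.ofReal (J p.1 p.2) with hF
  have hFmeas : Measurable F := hJmeas.ennreal_ofReal
  set T : Set (EuclideanSpace ℝ (Fin m) × EuclideanSpace ℝ (Fin m)) := {p | p.2 ∈ S} with hT
  have hTmeas : MeasurableSet T := measurable_snd hS
  have hTprod : T = Set.univ ×ˢ S := by ext p; simp [hT]
  set a : ENNReal := ∫⁻ ω, ENNReal.ofReal (J (X₀ ω) (Z ω)) ∂μ with ha
  set b : ENNReal := ∫⁻ ω, ENNReal.ofReal
      (S.indicator (fun z => J (X₀ ω) z) (ZG ω)) ∂μ with hb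
  -- rewrite a
  have haa : a = ∫⁻ x, ∫⁻ z, F (x, z) ∂(gaussianVec m 1) ∂ν := by
    rw [ha, ← lintegral_map hFmeas (hX₀.prodMk hZ), hpair1,
      lintegral_prod _ hFmeas.aemeasurable]
  -- rewrite b
  have hFind : ∀ ω, ENNReal.ofReal (S.indicator (fun z => J (X₀ ω) z) (ZG ω))
      = T.indicator F (X₀ ω, ZG ω) := by
    intro ω
    by_cases hzs : ZG ω ∈ S
    · rw [Set.indicator_of_mem hzs, Set.indicator_of_mem (by simpa [hT] using hzs)]
    · rw [Set.indicator_of_notMem hzs, Set.indicator_of_notMem (by simpa [hT] using hzs)]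
      simp
  have hbb : b = ∫⁻ x, ∫⁻ z, F (x, z) ∂((gaussianVec m σ).restrict S) ∂ν := by
    rw [hb]
    simp_rw [hFind]
    rw [← lintegral_map (hFmeas.indicator hTmeas) (hX₀.prodMk hZG), hpair2,
      lintegral_indicator hTmeas, hTprod, ← Measure.prod_restrict, Measure.restrict_univ,
      lintegral_prod _ hFmeas.aemeasurable]
  -- main inequality
  have hmain : ENNReal.ofReal c * b ≤ a := by
    rw [haa, hbb, ← lintegral_const_mul' _ _ ENNReal.ofReal_ne_top]
    refine lintegral_mono fun x => ?_
    rw [← smul_eq_mul (ENNReal.ofReal c), ← lintegral_smul_measure]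
    exact lintegral_mono' key le_rfl
  -- finiteness
  have hane : a ≠ ⊤ := by
    have := hint.hasFiniteIntegral
    rw [HasFiniteIntegral] at this
    refine ne_of_lt (lt_of_le_of_lt (le_of_eq ?_) this)
    rw [ha]
    refine lintegral_congr fun ω => ?_
    rw [← Real.enorm_eq_ofReal (hJnonneg _ _)]
  have hbne : b ≠ ⊤ := by
    have h2 := hintG.hasFiniteIntegral
    rw [HasFiniteIntegral] at h2
    refine ne_of_lt (lt_of_le_of_lt (lintegral_mono fun ω => ?_) h2)
    exact le_trans (ENNReal.ofReal_le_ofReal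
      (Set.indicator_le_self' (fun z _ => hJnonneg _ _) _))
      (le_of_eq (Real.enorm_eq_ofReal (hJnonneg (X₀ ω) (ZG ω))).symm)
  -- convert to real integrals
  have hInt1 : ∫ ω, J (X₀ ω) (Z ω) ∂μ = a.toReal := by
    rw [ha, integral_eq_lintegral_of_nonneg_ae
      (Filter.Eventually.of_forall fun ω => hJnonneg _ _)
      (hJmeas.comp (hX₀.prodMk hZ)).aestronglyMeasurable]
  have hInt2 : ∫ ω, S.indicator (fun z => J (X₀ ω) z) (ZG ω) ∂μ = b.toReal := by
    rw [hb, integral_eq_lintegral_of_nonneg_ae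
      (Filter.Eventually.of_forall fun ω =>
        Set.indicator_nonneg (fun z _ => hJnonneg _ _) _) ?_]
    · have heq : (fun ω => S.indicator (fun z => J (X₀ ω) z) (ZG ω))
          = fun ω => T.indicator (Function.uncurry J) (X₀ ω, ZG ω) := by
        funext ω
        by_cases hzs : ZG ω ∈ S
        · rw [Set.indicator_of_mem hzs, Set.indicator_of_mem (by simpa [hT] using hzs)]
          rfl
        · rw [Set.indicator_of_notMem hzs, Set.indicator_of_notMem (by simpa [hT] using hzs)]
      rw [heq]
      exact ((hJmeas.indicator hTmeas).comp (hX₀.prodMk hZG)).aestronglyMeasurable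
  rw [hInt1, hInt2, ge_iff_le]
  calc c * b.toReal = (ENNReal.ofReal c * b).toReal := by
        rw [ENNReal.toReal_mul, ENNReal.toReal_ofReal hc0.le]
    _ ≤ a.toReal := ENNReal.toReal_mono hane hmain
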